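/- Let n ≥ 2, 0 < β < n, and 1 < p < q < ∞ with 1/p − 1/q = β/n. For the function f₀(x) = (1 + |x|^{qβ})^{-(1 + n/(qβ))} on ℝⁿ one has the equality ‖H_β f₀‖_{L^q(ℝⁿ)} = C_{p,q,n,β} · ‖f₀‖_{L^p(ℝⁿ)}, where C_{p,q,n,β} = (p'/q)^{1/q} · ((n/(qβ)) · B(n/(qβ), n/(q'β)))^{-β/n}; in particular C_{p,q,n,β} is the operator norm of H_β from L^p(ℝⁿ) to L^q(ℝⁿ). -/

import Mathlib

open MeasureTheory Metric Set

noncomputable section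

/-- Euclidean space ℝⁿ. -/
abbrev Euc (n : ℕ) := EuclideanSpace ℝ (Fin n)

/-- Volume of the unit ball in ℝⁿ: Ω_n = π^(n/2) / Γ(1 + n/2). -/
def ballVol (n : ℕ) : ℝ := Real.pi ^ ((n : ℝ) / 2) / Real.Gamma (1 + (n : ℝ) / 2)

/-- Surface measure of the unit sphere S^{n-1}: ω_n = 2π^(n/2) / Γ(n/2). -/
def sphArea (n : ℕ) : ℝ := 2 * Real.pi ^ ((n : ℝ) / 2) / Real.Gamma ((n : ℝ) / 2)

/-- The surface measure dθ on the unit sphere S^{n-1} ⊂ ℝⁿ (total mass ω_n = n·Ω_n). -/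
def sphereMeasure (n : ℕ) : Measure (sphere (0 : Euc n) 1) :=
  (volume : Measure (Euc n)).toSphere

/-- Mixed radial-angular norm
‖f‖ = (∫₀^∞ (∫_{S^{n-1}} |f(rθ)|^{p̄} dθ)^{p/p̄} r^{n-1} dr)^{1/p}. -/
def mixedNorm (n : ℕ) (p pb : ℝ) (f : Euc n → ℝ) : ℝ :=
  (∫ r in Ioi (0 : ℝ),
      (∫ θ, |f (r • (θ : Euc n))| ^ pb ∂(sphereMeasure n)) ^ (p / pb) * r ^ ((n : ℝ) - 1)) ^ (1 / p)

/-- Weak mixed radial-angular norm: sup_{λ>0} λ‖χ_{|f|>λ}‖. -/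
def wMixedNorm (n : ℕ) (p pb : ℝ) (f : Euc n → ℝ) : ℝ :=
  ⨆ l : {l : ℝ // 0 < l},
    l.1 * mixedNorm n p pb (indicator {x | l.1 < |f x|} fun _ => (1 : ℝ))

/-- n-dimensional Hardy operator H f(x) = (Ω_n |x|ⁿ)⁻¹ ∫_{|y|<|x|} f(y) dy. -/
def hardyOp (n : ℕ) (f : Euc n → ℝ) (x : Euc n) : ℝ :=
  (ballVol n * ‖x‖ ^ n)⁻¹ * ∫ y in {y : Euc n | ‖y‖ < ‖x‖}, f y

/-- Dual Hardy operator H* f(x) = ∫_{|y|≥|x|} f(y)/(Ω_n |y|ⁿ) dy. -/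
def dualHardyOp (n : ℕ) (f : Euc n → ℝ) (x : Euc n) : ℝ :=
  ∫ y in {y : Euc n | ‖x‖ ≤ ‖y‖}, f y / (ballVol n * ‖y‖ ^ n)

/-- Fractional Hardy operator H_β f(x) = (Ω_n^{1/n}|x|)^{β-n} ∫_{|y|<|x|} f(y) dy. -/
def fracHardyOp (n : ℕ) (β : ℝ) (f : Euc n → ℝ) (x : Euc n) : ℝ :=
  (ballVol n ^ ((1 : ℝ) / n) * ‖x‖) ^ (-((n : ℝ) - β)) * ∫ y in {y : Euc n | ‖y‖ < ‖x‖}, f y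

/-- L^p norm on ℝⁿ. -/
def lpNorm (n : ℕ) (p : ℝ) (f : Euc n → ℝ) : ℝ := (∫ x : Euc n, |f x| ^ p) ^ (1 / p)

/-- Beta function B(a,b) = ∫₀¹ t^{a-1}(1-t)^{b-1} dt. -/
def betaFn (a b : ℝ) : ℝ := ∫ t in (0 : ℝ)..1, t ^ (a - 1) * (1 - t) ^ (b - 1)

/-- Sharp constant C_{p,q,n,β} = (p'/q)^{1/q}((n/(qβ))·B(n/(qβ), n/(q'β)))^{-β/n}. -/
def fracHardyConst (p q : ℝ) (n : ℕ) (β : ℝ) : ℝ :=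
  (p / (p - 1) / q) ^ (1 / q) *
    ((n / (q * β)) * betaFn ((n : ℝ) / (q * β)) ((n : ℝ) / ((q / (q - 1)) * β))) ^ (-(β / (n : ℝ)))




lemma betaFn_eq_gamma {x y : ℝ} (hx : 0 < x) (hy : 0 < y) :
    betaFn x y = Real.Gamma x * Real.Gamma y / Real.Gamma (x + y) := by
  have hbeta : Complex.betaIntegral x y = (betaFn x y : ℂ) := by
    rw [Complex.betaIntegral, betaFn, ← intervalIntegral.integral_ofReal]
    refine intervalIntegral.integral_congr fun t ht => ?_
    rw [uIcc_of_le (by norm_num)] at ht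
    rw [Complex.ofReal_mul, Complex.ofReal_cpow ht.1, Complex.ofReal_cpow (by linarith [ht.2] : (0:ℝ) ≤ 1 - t)]
    push_cast
    ring
  have h := Complex.Gamma_mul_Gamma_eq_betaIntegral (s := x) (t := y)
    (by simpa using hx) (by simpa using hy)
  rw [hbeta, ← Complex.ofReal_add, Complex.Gamma_ofReal, Complex.Gamma_ofReal,
    Complex.Gamma_ofReal, ← Complex.ofReal_mul, ← Complex.ofReal_mul] at h
  have h2 : Real.Gamma x * Real.Gamma y = Real.Gamma (x + y) * betaFn x y :=
    Complex.ofReal_injective h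
  have hne : Real.Gamma (x + y) ≠ 0 := (Real.Gamma_pos_of_pos (by linarith)).ne'
  field_simp [h2]
  rw [h2]; ring


-- Step 2: beta as integral over Ioi 0
lemma betaFn_eq_Ioi (a b : ℝ) :
    betaFn a b = ∫ u in Ioi (0:ℝ), u ^ (a - 1) * (1 + u) ^ (-(a + b)) := by
  have himg : (fun t : ℝ => t / (1 - t)) '' Ioo 0 1 = Ioi 0 := by
    ext u
    constructor
    · rintro ⟨t, ⟨ht0, ht1⟩, rfl⟩
      exact div_pos ht0 (by linarith)
    · intro hu
      refine ⟨u / (1 + u), ⟨div_pos hu (by linarith [mem_Ioi.mp hu]), ?_⟩, ?_⟩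
      · rw [div_lt_one (by linarith [mem_Ioi.mp hu])]; linarith [mem_Ioi.mp hu]
      · have h1 : (0:ℝ) < 1 + u := by linarith [mem_Ioi.mp hu]
        field_simp
        ring
    
  have hderiv : ∀ t ∈ Ioo (0:ℝ) 1, HasDerivWithinAt (fun t : ℝ => t / (1 - t))
      (1 / (1 - t) ^ 2) (Ioo 0 1) t := by
    intro t ht
    have h1 : (1:ℝ) - t ≠ 0 := by simp only [mem_Ioo] at ht; intro h; linarith
    have : HasDerivAt (fun t : ℝ => t / (1 - t))
        ((1 * (1 - t) - t * (0 - 1)) / (1 - t) ^ 2) t :=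
      (hasDerivAt_id t).div ((hasDerivAt_const t 1).sub (hasDerivAt_id t)) h1
    exact this.hasDerivWithinAt.congr_deriv (by ring)
  have hinj : InjOn (fun t : ℝ => t / (1 - t)) (Ioo 0 1) := by
    intro t1 h1 t2 h2 h
    simp only [mem_Ioo] at h1 h2
    have e1 : (1:ℝ) - t1 ≠ 0 := by intro h; linarith
    have e2 : (1:ℝ) - t2 ≠ 0 := by intro h; linarith
    field_simp at h
    linarith
  have key := integral_image_eq_integral_abs_deriv_smul measurableSet_Ioo hderiv hinj
    (fun u => u ^ (a - 1) * (1 + u) ^ (-(a + b)))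
  rw [himg] at key
  rw [betaFn, intervalIntegral.integral_of_le zero_le_one, integral_Ioc_eq_integral_Ioo, key]
  refine setIntegral_congr_fun measurableSet_Ioo fun t ht => ?_
  obtain ⟨ht0, ht1⟩ := ht
  have hs : (0:ℝ) < 1 - t := by linarith
  have h1 : (1:ℝ) + t / (1 - t) = 1 / (1 - t) := by field_simp; ring
  have e2 : ((1:ℝ) + t/(1-t))^(-(a+b)) = (1-t)^(a+b) := by
    rw [h1, one_div, Real.inv_rpow hs.le, Real.rpow_neg hs.le, inv_inv]
  have e3 : (t/(1-t))^(a-1) = t^(a-1) * ((1-t)^(a-1))⁻¹ := by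
    rw [Real.div_rpow ht0.le hs.le, div_eq_mul_inv]
  have e4 : (((1-t)^(2:ℕ) : ℝ))⁻¹ = (1-t)^(-(2:ℝ)) := by
    rw [← Real.rpow_natCast (1-t) 2, ← Real.rpow_neg hs.le]; norm_num
  have e5 : ((1-t)^(a-1))⁻¹ = (1-t)^(-(a-1)) := by rw [← Real.rpow_neg hs.le]
  have hsimp : (1-t) ^ (-(2:ℝ)) * (1-t)^(-(a-1)) * (1-t)^(a+b) = (1-t)^(b-1) := by
    rw [← Real.rpow_add hs, ← Real.rpow_add hs]; ring_nf
  rw [smul_eq_mul, e2, e3, abs_of_pos (by positivity), one_div, e4, e5]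
  linear_combination (-(t ^ (a-1))) * hsimp

lemma integral_rpow_subst {c : ℝ} (a b : ℝ) (hc : 0 < c) :
    ∫ u in Ioi (0:ℝ), u ^ (a - 1) * (1 + u) ^ (-(a + b))
      = c * ∫ r in Ioi (0:ℝ), r ^ (c * a - 1) * (1 + r ^ c) ^ (-(a + b)) := by
  rw [← integral_comp_rpow_Ioi (fun u => u ^ (a - 1) * (1 + u) ^ (-(a + b))) hc.ne',
    ← integral_const_mul]
  refine setIntegral_congr_fun measurableSet_Ioi fun x hx => ?_
  have hx0 : (0:ℝ) < x := hx
  rw [smul_eq_mul, abs_of_pos hc, ← Real.rpow_mul hx0.le]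
  have : x ^ (c-1) * x ^ (c*(a-1)) = x ^ (c*a - 1) := by
    rw [← Real.rpow_add hx0]; ring_nf
  linear_combination c * (1 + x ^ c) ^ (-(a + b)) * this

lemma betaFn_as_radial {c : ℝ} (a b : ℝ) (hc : 0 < c) :
    betaFn a b = c * ∫ r in Ioi (0:ℝ), r ^ (c * a - 1) * (1 + r ^ c) ^ (-(a + b)) := by
  rw [betaFn_eq_Ioi, integral_rpow_subst a b hc]


lemma ballVol_eq {n : ℕ} (hn : 0 < n) : (volume (ball (0 : Euc n) 1)).toReal = ballVol n := by
  haveI : Nonempty (Fin n) := ⟨⟨0, hn⟩⟩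
  rw [EuclideanSpace.volume_ball]
  rw [ENNReal.toReal_mul, ENNReal.toReal_pow, ENNReal.toReal_ofReal zero_le_one, one_pow, one_mul,
    ENNReal.toReal_ofReal (by positivity)]
  rw [ballVol, Fintype.card_fin]
  rw [Real.sqrt_eq_rpow, ← Real.rpow_natCast (Real.pi ^ ((1:ℝ)/2)) n, ← Real.rpow_mul Real.pi_pos.le]
  rw [add_comm]
  norm_num
  rw [show (1:ℝ)/2*(n:ℝ) = (n:ℝ)/2 by ring]

lemma ballVol_pos {n : ℕ} : 0 < ballVol n := by
  rw [ballVol]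
  exact div_pos (Real.rpow_pos_of_pos Real.pi_pos _) (Real.Gamma_pos_of_pos (by positivity))

lemma radial_int {n : ℕ} (hn : 0 < n) (g : ℝ → ℝ) :
    ∫ x : Euc n, g ‖x‖ = ((n : ℝ) * ballVol n) * ∫ r in Ioi (0:ℝ), r ^ ((n:ℝ) - 1) * g r := by
  haveI : Nontrivial (Euc n) :=
    ⟨EuclideanSpace.single ⟨0, hn⟩ 1, 0, fun h => by
      have := congrArg (fun v : Euc n => v ⟨0, hn⟩) h
      simp [EuclideanSpace.single_apply] at this⟩
  rw [integral_fun_norm_addHaar (volume : Measure (Euc n)) g]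
  rw [finrank_euclideanSpace_fin, measureReal_def, ballVol_eq hn, nsmul_eq_mul, smul_eq_mul, mul_assoc]
  have : ∫ y in Ioi (0:ℝ), y ^ (n-1) • g y = ∫ r in Ioi (0:ℝ), r ^ ((n:ℝ)-1) * g r := by
    refine setIntegral_congr_fun measurableSet_Ioi fun r hr => ?_
    rw [smul_eq_mul, ← Real.rpow_natCast r (n-1), Nat.cast_sub hn]
    norm_num
  rw [this]

lemma ball_radial {n : ℕ} (hn : 0 < n) (g : ℝ → ℝ) (R : ℝ) :
    ∫ y in {y : Euc n | ‖y‖ < R}, g ‖y‖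
      = ((n : ℝ) * ballVol n) * ∫ r in Ioo (0:ℝ) R, r ^ ((n:ℝ) - 1) * g r := by
  have hms : MeasurableSet {y : Euc n | ‖y‖ < R} :=
    measurableSet_lt measurable_norm measurable_const
  rw [← integral_indicator hms]
  have h1 : ∀ y : Euc n, indicator {y : Euc n | ‖y‖ < R} (fun y => g ‖y‖) y
      = (Iio R).indicator g ‖y‖ := by
    intro y
    by_cases h : ‖y‖ < R <;> simp [indicator, h]
  simp_rw [h1]
  rw [radial_int hn ((Iio R).indicator g)]
  congr 1
  have h2 : ∀ r : ℝ, r ^ ((n:ℝ)-1) * (Iio R).indicator g r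
      = (Iio R).indicator (fun r => r ^ ((n:ℝ)-1) * g r) r := by
    intro r
    by_cases h : r ∈ Iio R <;> simp [indicator, h]
  simp_rw [h2]
  rw [setIntegral_indicator measurableSet_Iio, Ioi_inter_Iio]

lemma ftc_eval {n : ℕ} (hn : 0 < n) {c R : ℝ} (hc : 0 < c) (hR : 0 < R) :
    ∫ r in Ioo (0:ℝ) R, r ^ ((n:ℝ) - 1) * (1 + r ^ c) ^ (-(1 + (n:ℝ)/c))
      = R ^ (n:ℕ) * (1 + R ^ c) ^ (-((n:ℝ)/c)) / n := by
  set F : ℝ → ℝ := fun r => r ^ (n:ℕ) * (1 + r ^ c) ^ (-((n:ℝ)/c)) / n with hF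
  set G : ℝ → ℝ := fun r => r ^ (n-1:ℕ) * (1 + r ^ c) ^ (-(1 + (n:ℝ)/c)) with hG
  have hrc : ContinuousOn (fun r : ℝ => 1 + r ^ c) (Icc 0 R) := by
    exact continuousOn_const.add (continuousOn_id.rpow_const fun x _ => Or.inr hc.le)
  have hrcpos : ∀ r ∈ Icc (0:ℝ) R, (0:ℝ) < 1 + r ^ c := by
    intro r hr
    have : 0 ≤ r ^ c := Real.rpow_nonneg hr.1 c
    linarith
  have hGcont : ContinuousOn G (Icc 0 R) := by
    exact (continuousOn_pow _).mul (hrc.rpow_const fun x hx => Or.inl (hrcpos x hx).ne')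
  have hFcont : ContinuousOn F (Icc 0 R) := by
    exact ((continuousOn_pow _).mul (hrc.rpow_const fun x hx => Or.inl (hrcpos x hx).ne')).div_const _
  have hn' : ((n:ℝ)) ≠ 0 := Nat.cast_ne_zero.mpr hn.ne'
  have hderiv : ∀ x ∈ Ioo (0:ℝ) R, HasDerivAt F (G x) x := by
    intro x hx
    have hx0 : (0:ℝ) < x := hx.1
    have hpos : (0:ℝ) < 1 + x ^ c := by positivity
    have hA : HasDerivAt (fun r : ℝ => r ^ (n:ℕ)) ((n:ℝ) * x ^ (n-1:ℕ)) x := by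
      simpa using hasDerivAt_pow n x
    have hB : HasDerivAt (fun r : ℝ => 1 + r ^ c) (c * x ^ (c-1)) x := by
      simpa using
        (Real.hasDerivAt_rpow_const (x := x) (p := c) (Or.inl hx0.ne')).const_add 1
    have hC : HasDerivAt (fun y : ℝ => y ^ (-((n:ℝ)/c)))
        (-((n:ℝ)/c) * (1 + x ^ c) ^ (-((n:ℝ)/c) - 1)) (1 + x ^ c) :=
      Real.hasDerivAt_rpow_const (Or.inl hpos.ne')
    have hD := hC.comp x hB
    have hE := (hA.mul hD).div_const (n:ℝ)
    refine hE.congr_deriv ?_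
    symm
    have k1 : (1+x^c)^(-((n:ℝ)/c)) = (1+x^c)^(-((n:ℝ)/c)-1) * (1+x^c) := by
      rw [← Real.rpow_add_one hpos.ne' (-((n:ℝ)/c)-1)]
      norm_num
    have k2 : x^(n:ℕ) * x^(c-1) = x^(n-1:ℕ) * x^c := by
      rw [← Real.rpow_natCast x n, ← Real.rpow_natCast x (n-1), ← Real.rpow_add hx0,
        ← Real.rpow_add hx0, Nat.cast_sub hn]
      ring_nf
    have k0 : -(1 + (n:ℝ)/c) = -((n:ℝ)/c) - 1 := by ring
    simp only [hG, k0, Function.comp]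
    rw [k1]
    have hcc : (n:ℝ)/c*c = n := div_mul_cancel₀ _ hc.ne'
    rw [eq_div_iff hn']
    linear_combination (((n:ℝ)/c) * c * (1+x^c)^(-((n:ℝ)/c) - 1)) * k2
      + (x^(n-1:ℕ) * x^c * (1+x^c)^(-((n:ℝ)/c) - 1)) * hcc
  have hint : IntervalIntegrable G volume 0 R :=
    hGcont.intervalIntegrable_of_Icc hR.le
  have key := intervalIntegral.integral_eq_sub_of_hasDeriv_right_of_le hR.le
    hFcont
    (fun x hx => (hderiv x hx).hasDerivWithinAt) hint
  have hF0 : F 0 = 0 := by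
    simp [hF, zero_pow hn.ne']
  rw [intervalIntegral.integral_of_le hR.le, integral_Ioc_eq_integral_Ioo] at key
  have hcong : ∫ r in Ioo (0:ℝ) R, r ^ ((n:ℝ) - 1) * (1 + r ^ c) ^ (-(1 + (n:ℝ)/c))
      = ∫ r in Ioo (0:ℝ) R, G r := by
    refine setIntegral_congr_fun measurableSet_Ioo fun r hr => ?_
    simp only [hG]
    rw [← Real.rpow_natCast r (n-1), Nat.cast_sub hn]
    norm_num
  rw [hcong, key, hF0, sub_zero, hF]

lemma betaFn_rec {a b : ℝ} (ha : 0 < a) (hb : 1 < b) :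
    betaFn (a+1) (b-1) = (a/(b-1)) * betaFn a b := by
  have hb1 : (0:ℝ) < b - 1 := by linarith
  rw [betaFn_eq_gamma (by linarith) hb1, betaFn_eq_gamma ha (by linarith)]
  have h1 : Real.Gamma (a+1) = a * Real.Gamma a := Real.Gamma_add_one ha.ne'
  have h2 : Real.Gamma b = (b-1) * Real.Gamma (b-1) := by
    have := Real.Gamma_add_one hb1.ne'
    rw [sub_add_cancel] at this
    exact this
  have h3 : a + 1 + (b - 1) = a + b := by ring
  rw [h1, h3, h2]
  have hg1 : Real.Gamma (a+b) ≠ 0 := (Real.Gamma_pos_of_pos (by linarith)).ne'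
  field_simp

lemma hardy_eval {n : ℕ} (hn : 0 < n) {β c : ℝ} (hβ0 : 0 < β) (hc : 0 < c) (x : Euc n) :
    fracHardyOp n β (fun y => (1 + ‖y‖ ^ c) ^ (-(1 + (n:ℝ)/c))) x
      = ballVol n ^ (β/(n:ℝ)) * ‖x‖ ^ β * (1 + ‖x‖ ^ c) ^ (-((n:ℝ)/c)) := by
  have hΩ : 0 < ballVol n := ballVol_pos
  have hnR : (0:ℝ) < n := Nat.cast_pos.mpr hn
  rcases eq_or_lt_of_le (norm_nonneg x) with h0 | hR
  · have hset : {y : Euc n | ‖y‖ < (0:ℝ)} = ∅ :=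
      eq_empty_iff_forall_notMem.mpr fun y hy => (norm_nonneg y).not_gt hy
    simp [fracHardyOp, ← h0, hset, Real.zero_rpow hβ0.ne']
  · simp only [fracHardyOp]
    rw [ball_radial hn (fun r => (1 + r ^ c) ^ (-(1 + (n:ℝ)/c))) ‖x‖,
      ftc_eval hn hc hR]
    set R := ‖x‖
    set Ω := ballVol n
    have e1 : (Ω^((1:ℝ)/n) * R)^(-((n:ℝ)-β))
        = Ω^(β/(n:ℝ) - 1) * R^(-((n:ℝ)-β)) := by
      rw [Real.mul_rpow (Real.rpow_nonneg hΩ.le _) hR.le, ← Real.rpow_mul hΩ.le,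
        show (1:ℝ)/n*(-((n:ℝ)-β)) = β/(n:ℝ) - 1 by field_simp; ring]
    have e3 : (R:ℝ)^(n:ℕ) = R^((n:ℝ)) := (Real.rpow_natCast R n).symm
    have e4 : R^(-((n:ℝ)-β)) * R^((n:ℝ)) = R^β := by
      rw [← Real.rpow_add hR]; ring_nf
    have e5 : Ω^(β/(n:ℝ) - 1) * Ω = Ω^(β/(n:ℝ)) := by
      rw [← Real.rpow_add_one hΩ.ne' (β/(n:ℝ)-1)]; ring_nf
    rw [e1, e3]
    have hinv : (n:ℝ) * ((n:ℝ))⁻¹ = 1 := mul_inv_cancel₀ hnR.ne'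
    linear_combination (Ω^(β/(n:ℝ)-1) * Ω * (1+R^c)^(-((n:ℝ)/c))) * e4
      + (R^β * (1+R^c)^(-((n:ℝ)/c))) * e5
      + (Ω^(β/(n:ℝ)-1) * R^(-((n:ℝ)-β)) * Ω * R^((n:ℝ)) * (1+R^c)^(-((n:ℝ)/c))) * hinv

/-- extremality of f₀(x) = (1+|x|^{qβ})^{-(1+n/(qβ))} and sharpness of
C_{p,q,n,β} as the L^p → L^q operator norm of H_β. -/
theorem fracHardy_lp_extremal (n : ℕ) (hn : 2 ≤ n) (β p q : ℝ)
    (hβ0 : 0 < β) (hβn : β < n) (hp : 1 < p) (hpq : p < q)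
    (hscal : 1 / p - 1 / q = β / n) :
    lpNorm n q (fracHardyOp n β fun x => (1 + ‖x‖ ^ (q * β)) ^ (-(1 + (n : ℝ) / (q * β))))
        = fracHardyConst p q n β *
          lpNorm n p (fun x => (1 + ‖x‖ ^ (q * β)) ^ (-(1 + (n : ℝ) / (q * β)))) ∧
      ∀ C : ℝ, 0 ≤ C →
        (∀ f : Euc n → ℝ, (∀ x, 0 ≤ f x) → Measurable f →
          lpNorm n q (fracHardyOp n β f) ≤ C * lpNorm n p f) →
        fracHardyConst p q n β ≤ C := by
  have hq : 1 < q := hp.trans hpq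
  have hn0 : 0 < n := by omega
  have hnR : (0:ℝ) < n := Nat.cast_pos.mpr hn0
  have hq0 : (0:ℝ) < q := by linarith
  have hp0 : (0:ℝ) < p := by linarith
  have hq1 : (0:ℝ) < q - 1 := by linarith
  have hp1 : (0:ℝ) < p - 1 := by linarith
  have hcpos : 0 < q * β := mul_pos hq0 hβ0
  have hscal' : β * (p * q) = (q - p) * n := by
    have h := hscal
    field_simp at h
    linarith
  set c := q * β with hcdef
  set Ω := ballVol n with hΩdef
  have hΩ : 0 < Ω := ballVol_pos
  set a := (n:ℝ)/c with hadef
  set b := (n:ℝ)/((q/(q-1))*β) with hbdef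
  have ha : 0 < a := div_pos hnR hcpos
  have hbden : 0 < (q/(q-1))*β := mul_pos (div_pos hq0 hq1) hβ0
  have hb : 0 < b := div_pos hnR hbden
  have hab : a + b = (n:ℝ)/β := by
    rw [hadef, hbdef, hcdef]
    field_simp
    ring
  have hb1 : 1 < b := by
    rw [hbdef, lt_div_iff₀ hbden, one_mul, div_mul_eq_mul_div, div_lt_iff₀ hq1]
    nlinarith [hscal']
  have hBpos : 0 < betaFn a b := by
    rw [betaFn_eq_gamma ha hb]
    exact div_pos (mul_pos (Real.Gamma_pos_of_pos ha) (Real.Gamma_pos_of_pos hb))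
      (Real.Gamma_pos_of_pos (by linarith))
  set f₀ : Euc n → ℝ := fun x : Euc n => (1 + ‖x‖ ^ c) ^ (-(1 + a)) with hf₀def
  have hca : c * a = (n:ℝ) := by rw [hadef]; field_simp
  have h1p : 1/p = β/(n:ℝ) + 1/q := by rw [← hscal]; ring
  have hpab : p * (1 + a) = a + b := by
    rw [hadef, hbdef, hcdef]
    field_simp
    nlinarith [hscal']
  have hbc : b * c = (n:ℝ)*(q-1) := by
    rw [hbdef, hcdef]
    field_simp
  have hI3 : a/(b-1) = p/(p-1)/q := by
    have hbm1 : (0:ℝ) < b - 1 := by linarith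
    rw [div_div, div_div, div_eq_div_iff (mul_pos hcpos hbm1).ne' (mul_pos hp1 hq0).ne']
    linear_combination (-p) * hbc + p * hcdef + hscal'
  have haq : a * q = a + b := by
    rw [hab, hadef, hcdef]
    field_simp
  -- the p-norm integral
  have hNp : (∫ x : Euc n, |f₀ x| ^ p) = ((n:ℝ)*Ω/c) * betaFn a b := by
    have hpt : (fun x : Euc n => |f₀ x| ^ p)
        = fun x : Euc n => (fun r : ℝ => (1 + r^c)^(-(a+b))) ‖x‖ := by
      funext x
      have hbase : (0:ℝ) < 1 + ‖x‖^c := by positivity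
      simp only [hf₀def]
      rw [abs_of_nonneg (Real.rpow_nonneg hbase.le _), ← Real.rpow_mul hbase.le]
      congr 1
      linear_combination -hpab
    rw [hpt, radial_int hn0 (fun r : ℝ => (1 + r^c)^(-(a+b)))]
    have hB := betaFn_as_radial a b hcpos
    rw [hca] at hB
    rw [show (∫ r in Ioi (0:ℝ), r ^ ((n:ℝ)-1) * (1 + r^c)^(-(a+b)))
        = betaFn a b / c from by rw [hB]; field_simp]
    ring
  -- the q-norm integral
  have hHeval : ∀ x : Euc n, fracHardyOp n β f₀ x
      = Ω^(β/(n:ℝ)) * ‖x‖^β * (1+‖x‖^c)^(-a) := by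
    intro x
    rw [hf₀def, hΩdef, hadef]
    rw [show -(1 + (n:ℝ)/c) = -(1 + (n:ℝ)/c) from rfl]
    exact hardy_eval hn0 hβ0 hcpos x
  have hNq : (∫ x : Euc n, |fracHardyOp n β f₀ x| ^ q)
      = Ω^(q*β/(n:ℝ)) * (((n:ℝ)*Ω/c) * ((a/(b-1)) * betaFn a b)) := by
    have hpt : (fun x : Euc n => |fracHardyOp n β f₀ x| ^ q)
        = fun x : Euc n => Ω^(q*β/(n:ℝ)) *
            ((fun r : ℝ => r^c * (1 + r^c)^(-((a+1)+(b-1)))) ‖x‖) := by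
      funext x
      have hbase : (0:ℝ) < 1 + ‖x‖^c := by positivity
      rw [hHeval x, abs_of_nonneg (by positivity)]
      rw [Real.mul_rpow (by positivity) (by positivity),
        Real.mul_rpow (by positivity) (by positivity)]
      rw [← Real.rpow_mul hΩ.le, ← Real.rpow_mul (norm_nonneg x), ← Real.rpow_mul hbase.le]
      rw [show β/(n:ℝ)*q = q*β/(n:ℝ) from by ring,
        show β*q = c from by rw [hcdef]; ring,
        show (-a)*q = -((a+1)+(b-1)) from by linear_combination -haq]
      ring
    rw [hpt, integral_const_mul,
      radial_int hn0 (fun r : ℝ => r^c * (1 + r^c)^(-((a+1)+(b-1))))]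
    have hsub : (∫ r in Ioi (0:ℝ), r^((n:ℝ)-1) * (r^c * (1+r^c)^(-((a+1)+(b-1)))))
        = ∫ r in Ioi (0:ℝ), r^(c*(a+1)-1) * (1+r^c)^(-((a+1)+(b-1))) := by
      refine setIntegral_congr_fun measurableSet_Ioi fun r hr => ?_
      have hr0 : (0:ℝ) < r := hr
      rw [← mul_assoc, ← Real.rpow_add hr0]
      congr 2
      linear_combination -hca
    have hB2 := betaFn_as_radial (a+1) (b-1) hcpos
    rw [hsub, show (∫ r in Ioi (0:ℝ), r^(c*(a+1)-1) * (1+r^c)^(-((a+1)+(b-1))))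
        = betaFn (a+1) (b-1) / c from by rw [hB2]; field_simp,
      betaFn_rec ha hb1]
    ring
  -- the norm equality
  have heq : lpNorm n q (fracHardyOp n β f₀) = fracHardyConst p q n β * lpNorm n p f₀ := by
    simp only [_root_.lpNorm]
    rw [hNq, hNp]
    simp only [fracHardyConst, ← hcdef, ← hadef, ← hbdef]
    set B := betaFn a b with hBdef
    set K := (n:ℝ)*Ω/c * B with hKdef
    have hK : 0 < K := mul_pos (by positivity) hBpos
    have hKM : K = Ω * (a * B) := by rw [hKdef, hadef]; ring
    rw [show Ω^(q*β/(n:ℝ)) * (((n:ℝ)*Ω/c) * ((a/(b-1)) * B))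
        = Ω^(q*β/(n:ℝ)) * ((p/(p-1)/q) * K) from by rw [← hI3, hKdef]; ring]
    rw [Real.mul_rpow (by positivity) (by positivity),
      Real.mul_rpow (by positivity) hK.le,
      ← Real.rpow_mul hΩ.le,
      show (q*β/(n:ℝ))*(1/q) = β/(n:ℝ) from by field_simp]
    have hKp : K^(1/p) = K^(β/(n:ℝ)) * K^(1/q) := by
      rw [← Real.rpow_add hK, ← h1p]
    have hKβ : K^(β/(n:ℝ)) = Ω^(β/(n:ℝ)) * (a*B)^(β/(n:ℝ)) := by
      rw [hKM, Real.mul_rpow hΩ.le (by positivity)]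
    have hMM : (a*B)^(-(β/(n:ℝ))) * (a*B)^(β/(n:ℝ)) = 1 := by
      rw [← Real.rpow_add (mul_pos ha hBpos)]
      simp
    rw [hKp, hKβ]
    linear_combination (-(Ω^(β/(n:ℝ)) * (p/(p-1)/q)^(1/q) * K^(1/q))) * hMM
  refine ⟨heq, fun C hC hbound => ?_⟩
  have hcont : Continuous f₀ := by
    rw [hf₀def]
    exact (continuous_const.add (continuous_norm.rpow_const fun x =>
      Or.inr hcpos.le)).rpow_const fun x => Or.inl (by show (1:ℝ) + ‖x‖ ^ c ≠ 0; positivity)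
  have h := hbound f₀ (fun x => Real.rpow_nonneg (by positivity) _) hcont.measurable
  rw [heq] at h
  have hNp_pos : 0 < lpNorm n p f₀ := by
    simp only [_root_.lpNorm]
    rw [hNp]
    exact Real.rpow_pos_of_pos (mul_pos (by positivity) hBpos) _
  exact (mul_le_mul_iff_left₀ hNp_pos).mp h


end
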